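/- Lemma 1, Tukey instance: Let c1, c2 > 0 and set rho_1(t) = rho_{c1}(sqrt(t)) and rho_2(t) = rho_{c2}(sqrt(t)) for t >= 0, where rho_c is Tukey's biweight. Then the composite objective f -> L(f) is a concave function on the convex set of nonnegative arrays f = (f_{ia}^{(j)}). -/

import Mathlib

open scoped BigOperators

/-- Tukey's biweight function `ρ_c`. -/
noncomputable def tukeyBiweight (c t : ℝ) : ℝ :=
  if |t| ≤ c then 1 - (1 - t ^ 2 / c ^ 2) ^ 3 else 1

/-- The function `t ↦ ρ_c(√t)`; for `t ≥ 0` this equals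
`tukeyBiweight c (Real.sqrt t)`, i.e. `1 - (1 - t/c²)³` on `[0, c²]` and `1` beyond. -/
noncomputable def tukeySq (c t : ℝ) : ℝ :=
  if t ≤ c ^ 2 then 1 - (1 - t / c ^ 2) ^ 3 else 1

/-- The diagonal mean of squared residuals `r_i^{(j)}(f)`. -/
noncomputable def rIJ {N p : ℕ} (n : Fin N → ℕ)
    (f : (i : Fin N) → Fin p → Fin (n i) → ℝ) (i : Fin N) (j : Fin p) : ℝ :=
  (∑ a : Fin (n i), f i j a) / (n i : ℝ)

/-- The casewise quantity `r_i(f)`. -/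
noncomputable def rI {N p : ℕ} (n : Fin N → ℕ) (σ1 : Fin p → ℝ) (ρ1 : ℝ → ℝ)
    (f : (i : Fin N) → Fin p → Fin (n i) → ℝ) (i : Fin N) : ℝ :=
  (∑ j : Fin p, σ1 j ^ 2 * ρ1 (rIJ n f i j / σ1 j ^ 2)) / (p : ℝ)

/-- The RODESSA weights `w_{ia}^{(j)}(f) = ρ₂'(r_i(f)/σ₂²) * ρ₁'(r_i^{(j)}(f)/σ_{1,j}²)`. -/
noncomputable def rodessaWeight {N p : ℕ} (n : Fin N → ℕ) (σ1 : Fin p → ℝ) (σ2 : ℝ)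
    (ρ1 ρ1' ρ2' : ℝ → ℝ)
    (f : (i : Fin N) → Fin p → Fin (n i) → ℝ) (i : Fin N) (j : Fin p) : ℝ :=
  ρ2' (rI n σ1 ρ1 f i / σ2 ^ 2) * ρ1' (rIJ n f i j / σ1 j ^ 2)

/-- The composite RODESSA objective `L(f)`. -/
noncomputable def Lobj {N p : ℕ} (n : Fin N → ℕ) (σ1 : Fin p → ℝ) (σ2 : ℝ)
    (ρ1 ρ2 : ℝ → ℝ) (f : (i : Fin N) → Fin p → Fin (n i) → ℝ) : ℝ :=
  ∑ i : Fin N, (p : ℝ) * (n i : ℝ) * σ2 ^ 2 *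
    ρ2 ((∑ j : Fin p, (n i : ℝ) * σ1 j ^ 2 *
          ρ1 ((∑ a : Fin (n i), f i j a) / ((n i : ℝ) * σ1 j ^ 2))) /
        ((p : ℝ) * (n i : ℝ) * σ2 ^ 2))


open Set

lemma tukeySq_eq {c : ℝ} (hc : 0 < c) (t : ℝ) :
    tukeySq c t = 1 - max (1 - t / c ^ 2) 0 ^ 3 := by
  have hc2 : (0:ℝ) < c ^ 2 := by positivity
  unfold tukeySq
  rcases le_or_gt t (c ^ 2) with h | h
  · rw [if_pos h, max_eq_left (sub_nonneg.2 ((div_le_one hc2).2 h))]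
  · rw [if_neg (not_le.2 h), max_eq_right (sub_nonpos.2 ((one_le_div hc2).2 h.le))]
    norm_num

lemma cube_combo {a b u v : ℝ} (ha : 0 ≤ a) (hb : 0 ≤ b) (hab : a + b = 1)
    (hu : 0 ≤ u) (hv : 0 ≤ v) : (a * u + b * v) ^ 3 ≤ a * u ^ 3 + b * v ^ 3 := by
  have := (convexOn_pow (𝕜 := ℝ) 3).2 (mem_Ici.2 hu) (mem_Ici.2 hv) ha hb hab
  simpa [smul_eq_mul] using this

lemma relu3_combo {x y a b : ℝ} (ha : 0 ≤ a) (hb : 0 ≤ b) (hab : a + b = 1) :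
    max (a * x + b * y) 0 ^ 3 ≤ a * max x 0 ^ 3 + b * max y 0 ^ 3 := by
  have h1 : max (a * x + b * y) 0 ≤ a * max x 0 + b * max y 0 := by
    refine max_le (add_le_add (mul_le_mul_of_nonneg_left (le_max_left _ _) ha)
      (mul_le_mul_of_nonneg_left (le_max_left _ _) hb)) (by positivity)
  calc max (a * x + b * y) 0 ^ 3 ≤ (a * max x 0 + b * max y 0) ^ 3 :=
        pow_le_pow_left₀ (le_max_right _ _) h1 3
    _ ≤ a * max x 0 ^ 3 + b * max y 0 ^ 3 :=
        cube_combo ha hb hab (le_max_right _ _) (le_max_right _ _)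

lemma tukeySq_concave_ineq {c : ℝ} (hc : 0 < c) {x y a b : ℝ}
    (ha : 0 ≤ a) (hb : 0 ≤ b) (hab : a + b = 1) :
    a * tukeySq c x + b * tukeySq c y ≤ tukeySq c (a * x + b * y) := by
  have hc2 : (c:ℝ) ^ 2 ≠ 0 := by positivity
  rw [tukeySq_eq hc, tukeySq_eq hc, tukeySq_eq hc]
  have hlin : 1 - (a * x + b * y) / c ^ 2 = a * (1 - x / c ^ 2) + b * (1 - y / c ^ 2) := by
    rw [add_div, mul_div_assoc, mul_div_assoc]
    nlinarith [hab, sq_nonneg a]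
  rw [hlin]
  have h := relu3_combo (x := 1 - x / c ^ 2) (y := 1 - y / c ^ 2) ha hb hab
  nlinarith [h]

lemma tukeySq_mono {c : ℝ} (hc : 0 < c) : Monotone (tukeySq c) := by
  intro x y hxy
  rw [tukeySq_eq hc, tukeySq_eq hc]
  have hc2 : (0:ℝ) < c ^ 2 := by positivity
  have h : max (1 - y / c ^ 2) 0 ≤ max (1 - x / c ^ 2) 0 :=
    max_le_max (by gcongr) le_rfl
  have := pow_le_pow_left₀ (le_max_right (1 - y / c ^ 2) 0) h 3
  linarith

lemma weighted_step {a b B u v w : ℝ} (hB : 0 ≤ B) (h : a * u + b * v ≤ w) :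
    a * (B * u) + b * (B * v) ≤ B * w := by
  calc a * (B * u) + b * (B * v) = B * (a * u + b * v) := by ring
    _ ≤ B * w := mul_le_mul_of_nonneg_left h hB

/-- **Lemma 1, Tukey instance.** With `ρ₁(t) = ρ_{c₁}(√t)` and `ρ₂(t) = ρ_{c₂}(√t)`,
where `ρ_c` is Tukey's biweight, the composite objective `f ↦ L(f)` is concave on the
convex set of nonnegative arrays `f = (f_{ia}^{(j)})`. -/
theorem rodessa_objective_concave_tukey
    {N p : ℕ} (hN : 1 ≤ N) (hp : 1 ≤ p)
    {n : Fin N → ℕ} (hn : ∀ i, 1 ≤ n i)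
    {σ1 : Fin p → ℝ} (hσ1 : ∀ j, 0 < σ1 j) {σ2 : ℝ} (hσ2 : 0 < σ2)
    {c1 c2 : ℝ} (hc1 : 0 < c1) (hc2 : 0 < c2) :
    ConcaveOn ℝ
      {f : (i : Fin N) → Fin p → Fin (n i) → ℝ | ∀ i j a, 0 ≤ f i j a}
      (Lobj n σ1 σ2 (tukeySq c1) (tukeySq c2)) := by
  have hset : Convex ℝ {f : (i : Fin N) → Fin p → Fin (n i) → ℝ | ∀ i j a, 0 ≤ f i j a} := by
    intro x hx y hy a b ha hb hab i j k
    have h1 := hx i j k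
    have h2 := hy i j k
    simp only [Pi.add_apply, Pi.smul_apply, smul_eq_mul]
    positivity
  refine ConcaveOn.subset (t := univ) ⟨convex_univ, ?_⟩ (subset_univ _) hset
  intro x _ y _ a b ha hb hab
  simp only [Lobj, smul_eq_mul, Pi.add_apply, Pi.smul_apply]
  rw [Finset.mul_sum, Finset.mul_sum, ← Finset.sum_add_distrib]
  refine Finset.sum_le_sum fun i _ => ?_
  have hni : (0:ℝ) < (n i : ℝ) := by exact_mod_cast Nat.lt_of_lt_of_le Nat.zero_lt_one (hn i)
  have hpp : (0:ℝ) < (p : ℝ) := by exact_mod_cast Nat.lt_of_lt_of_le Nat.zero_lt_one hp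
  have hApos : (0:ℝ) < (p : ℝ) * (n i : ℝ) * σ2 ^ 2 := by positivity
  set A : ℝ := (p : ℝ) * (n i : ℝ) * σ2 ^ 2 with hA
  set Sx : ℝ := ∑ j : Fin p, (n i : ℝ) * σ1 j ^ 2 *
      tukeySq c1 ((∑ a' : Fin (n i), x i j a') / ((n i : ℝ) * σ1 j ^ 2)) with hSx
  set Sy : ℝ := ∑ j : Fin p, (n i : ℝ) * σ1 j ^ 2 *
      tukeySq c1 ((∑ a' : Fin (n i), y i j a') / ((n i : ℝ) * σ1 j ^ 2)) with hSy
  set Sz : ℝ := ∑ j : Fin p, (n i : ℝ) * σ1 j ^ 2 *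
      tukeySq c1 ((∑ a' : Fin (n i), (a * x i j a' + b * y i j a')) / ((n i : ℝ) * σ1 j ^ 2))
    with hSz
  have hS : a * Sx + b * Sy ≤ Sz := by
    rw [hSx, hSy, hSz, Finset.mul_sum, Finset.mul_sum, ← Finset.sum_add_distrib]
    refine Finset.sum_le_sum fun j _ => ?_
    have hB : (0:ℝ) ≤ (n i : ℝ) * σ1 j ^ 2 := by positivity
    refine weighted_step hB ?_
    have hsum : (∑ a' : Fin (n i), (a * x i j a' + b * y i j a')) / ((n i : ℝ) * σ1 j ^ 2)
        = a * ((∑ a' : Fin (n i), x i j a') / ((n i : ℝ) * σ1 j ^ 2))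
          + b * ((∑ a' : Fin (n i), y i j a') / ((n i : ℝ) * σ1 j ^ 2)) := by
      rw [Finset.sum_add_distrib, ← Finset.mul_sum, ← Finset.mul_sum, add_div,
        mul_div_assoc, mul_div_assoc]
    rw [hsum]
    exact tukeySq_concave_ineq hc1 ha hb hab
  have h1 : a * tukeySq c2 (Sx / A) + b * tukeySq c2 (Sy / A)
      ≤ tukeySq c2 (a * (Sx / A) + b * (Sy / A)) := tukeySq_concave_ineq hc2 ha hb hab
  have h2 : tukeySq c2 (a * (Sx / A) + b * (Sy / A)) ≤ tukeySq c2 (Sz / A) := by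
    refine tukeySq_mono hc2 ?_
    rw [mul_div_assoc', mul_div_assoc', ← add_div]
    gcongr
  exact weighted_step hApos.le (h1.trans h2)
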